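/- (Piggybacking Design 1, repair of a systematic node not in the last group.) Let F be a field, r ≥ 2, t ≥ 1, and k = r·t. Let p₀, p_mid, p_last : Fin k → F be encoding vectors, and let ℓ : Fin k lie in a group G_j = {i : j·t ≤ i < (j+1)·t} for some j ≤ r−2. Assume p₀ ℓ ≠ 0 and p_last ℓ ≠ 0. Then there exists a function φ taking k + t field elements to F × F such that for all messages a, b : Fin k → F, applying φ to the values (b i for each i ≠ ℓ), Σ_{i} p₀ i · b i, Σ_{i} p_mid i · b i + Σ_{i ∈ G_j} p_last i · a i, and (a i for each i ∈ G_j with i ≠ ℓ) yields (a ℓ, b ℓ). That is, in the Design-1 piggybacked code the failed systematic node ℓ is repaired by reading and downloading only k + t symbols. -/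

import Mathlib

/-- Piggybacking Design 1, repair of a systematic node `ℓ` not in the last group:
`ℓ` is repaired by reading and downloading only `k + t` symbols, namely the `k - 1`
symbols `b i` (`i ≠ ℓ`), the first parity symbol of the `b`-instance, the
piggybacked parity symbol whose piggyback is supported on the group of `ℓ`, and the
`t - 1` symbols `a i` for the other members `i` of the group of `ℓ`. -/
theorem design1_repair_systematic_not_last_group
    {F : Type*} [Field F] {r t : ℕ} (hr : 2 ≤ r) (ht : 1 ≤ t)
    {k : ℕ} (hk : k = r * t)
    (p₀ pmid plast : Fin k → F) (ℓ : Fin k) (j : ℕ) (hj : j ≤ r - 2)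
    (hℓ₁ : j * t ≤ (ℓ : ℕ)) (hℓ₂ : (ℓ : ℕ) < (j + 1) * t)
    (hp₀ : p₀ ℓ ≠ 0) (hpl : plast ℓ ≠ 0) :
    ∃ φ : ({i : Fin k // i ≠ ℓ} → F) → F → F →
        ({i : Fin k // (j * t ≤ (i : ℕ) ∧ (i : ℕ) < (j + 1) * t) ∧ i ≠ ℓ} → F) →
        F × F,
      ∀ a b : Fin k → F,
        φ (fun i => b i) (∑ i, p₀ i * b i)
          (∑ i, pmid i * b i +
            ∑ i ∈ Finset.univ.filter
                (fun i : Fin k => j * t ≤ (i : ℕ) ∧ (i : ℕ) < (j + 1) * t),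
              plast i * a i)
          (fun i => a i) = (a ℓ, b ℓ) := by
  refine ⟨fun f s₀ s₁ g =>
    let bl := (s₀ - ∑ i : {i : Fin k // i ≠ ℓ}, p₀ i * f i) / p₀ ℓ
    let b' : Fin k → F := fun i => if h : i = ℓ then bl else f ⟨i, h⟩
    let al := (s₁ - ∑ i, pmid i * b' i -
      ∑ i : {i : Fin k // (j * t ≤ (i : ℕ) ∧ (i : ℕ) < (j + 1) * t) ∧ i ≠ ℓ},
        plast i * g i) / plast ℓ
    (al, bl), ?_⟩
  intro a b
  simp only
  have hsub : ∀ c : Fin k → F,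
      (∑ i : {i : Fin k // i ≠ ℓ}, p₀ i * c i) = ∑ i ∈ Finset.univ.erase ℓ, p₀ i * c i := by
    intro c
    exact (Finset.sum_subtype (p := fun i => i ≠ ℓ) (Finset.univ.erase ℓ)
      (fun x => by simp) (fun i => p₀ i * c i)).symm
  have hbsum : (∑ i, p₀ i * b i) = p₀ ℓ * b ℓ + ∑ i : {i : Fin k // i ≠ ℓ}, p₀ i * b i := by
    rw [hsub]
    exact (Finset.add_sum_erase _ (fun i => p₀ i * b i) (Finset.mem_univ ℓ)).symm
  have hbl : (∑ i, p₀ i * b i - ∑ i : {i : Fin k // i ≠ ℓ}, p₀ i * b i) / p₀ ℓ = b ℓ := by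
    rw [hbsum]; field_simp; ring
  rw [hbl]
  have hb' : (∑ x : Fin k, pmid x * if h : x = ℓ then b ℓ else b x)
      = ∑ x : Fin k, pmid x * b x :=
    Finset.sum_congr rfl fun x _ => by split <;> simp_all
  rw [hb']
  have hmem : ℓ ∈ Finset.univ.filter
      (fun i : Fin k => j * t ≤ (i : ℕ) ∧ (i : ℕ) < (j + 1) * t) := by
    simp [hℓ₁, hℓ₂]
  have hasum : (∑ i ∈ Finset.univ.filter
        (fun i : Fin k => j * t ≤ (i : ℕ) ∧ (i : ℕ) < (j + 1) * t), plast i * a i)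
      = plast ℓ * a ℓ +
        ∑ i : {i : Fin k // (j * t ≤ (i : ℕ) ∧ (i : ℕ) < (j + 1) * t) ∧ i ≠ ℓ},
          plast i * a i := by
    rw [Finset.sum_subtype ((Finset.univ.filter
        (fun i : Fin k => j * t ≤ (i : ℕ) ∧ (i : ℕ) < (j + 1) * t)).erase ℓ)
      (by intro x; simp [Finset.mem_erase]; tauto) (fun i => plast i * a i) |>.symm]
    exact (Finset.add_sum_erase _ (fun i => plast i * a i) hmem).symm
  have : (∑ i, pmid i * b i +
      ∑ i ∈ Finset.univ.filter
        (fun i : Fin k => j * t ≤ (i : ℕ) ∧ (i : ℕ) < (j + 1) * t), plast i * a i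
      - ∑ i, pmid i * b i -
      ∑ i : {i : Fin k // (j * t ≤ (i : ℕ) ∧ (i : ℕ) < (j + 1) * t) ∧ i ≠ ℓ},
        plast i * a i) / plast ℓ = a ℓ := by
    rw [hasum]; field_simp; ring
  rw [this]
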